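/- arXiv:1104.4313 — 3 statements merged into one kernel-verified Lean document; each statement's English description precedes it below -/
import Mathlib

section
/- For real z > 0 and real r > 0, the integral of e^{i λ r}/(λ² + z²) over λ ∈ ℝ equals (π/z)·e^{-z r}. -/
open MeasureTheory Real Filter Set Complex FourierTransform
open scoped Topology

lemma aux_integrableOn_cexp_Ioi {c : ℂ} (hc : c.re < 0) :
    IntegrableOn (fun x : ℝ => Complex.exp (c * x)) (Set.Ioi (0:ℝ)) := by
  have h : IntegrableOn (fun x : ℝ => Real.exp (-(-c.re) * x)) (Set.Ioi (0:ℝ)) :=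
    exp_neg_integrableOn_Ioi 0 (by linarith)
  refine h.mono' ?_ ?_
  · exact (Complex.continuous_exp.comp
      (continuous_const.mul Complex.continuous_ofReal)).aestronglyMeasurable
  · filter_upwards with x
    simp [Complex.norm_exp, Complex.mul_re]

lemma aux_integrableOn_cexp_Iic {c : ℂ} (hc : 0 < c.re) :
    IntegrableOn (fun x : ℝ => Complex.exp (c * x)) (Set.Iic (0:ℝ)) := by
  have A : MeasurableEmbedding fun x : ℝ => -x :=
    (Homeomorph.neg ℝ).isClosedEmbedding.measurableEmbedding
  have h : IntegrableOn (fun x : ℝ => Complex.exp (c * (-x : ℝ))) (Set.Ioi (0:ℝ)) := by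
    have h0 : IntegrableOn (fun x : ℝ => Complex.exp ((-c) * x)) (Set.Ioi (0:ℝ)) :=
      aux_integrableOn_cexp_Ioi (by simpa using hc)
    refine h0.congr_fun (fun x _ => ?_) measurableSet_Ioi
    push_cast; ring_nf
  have key : (volume : Measure ℝ).restrict (Set.Iio (0:ℝ))
      = Measure.map (fun x : ℝ => -x) ((volume : Measure ℝ).restrict (Set.Ioi (0:ℝ))) := by
    rw [← Measure.map_neg_eq_self (volume : Measure ℝ)]
    rw [A.restrict_map]
    congr 1
    ext x; simp
  have h2 : IntegrableOn (fun x : ℝ => Complex.exp (c * x)) (Set.Iio (0:ℝ)) := by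
    rw [IntegrableOn, key, A.integrable_map_iff]
    exact h
  exact h2.congr_set_ae Iio_ae_eq_Iic.symm

lemma aux_integral_cexp_Ioi {c : ℂ} (hc : c.re < 0) :
    ∫ x in Set.Ioi (0:ℝ), Complex.exp (c * x) = -c⁻¹ := by
  have hc0 : c ≠ 0 := fun h => by simp [h] at hc
  have hderiv : ∀ x ∈ Set.Ici (0:ℝ),
      HasDerivAt (fun y : ℝ => c⁻¹ * Complex.exp (c * y)) (Complex.exp (c * x)) x := by
    intro x _
    have h1 := ((((hasDerivAt_id (x:ℂ)).const_mul c).cexp).const_mul c⁻¹).comp_ofReal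
    convert h1 using 1
    · simp only [id]
    · simp only [id]; field_simp
  have htend : Tendsto (fun x : ℝ => c⁻¹ * Complex.exp (c * x)) atTop (𝓝 0) := by
    rw [tendsto_zero_iff_norm_tendsto_zero]
    have h2 : Tendsto (fun x : ℝ => -c.re * x) atTop atTop :=
      tendsto_id.const_mul_atTop (by linarith)
    have h3 : Tendsto (fun x : ℝ => Real.exp (c.re * x)) atTop (𝓝 0) := by
      have := Real.tendsto_exp_neg_atTop_nhds_zero.comp h2
      simpa [Function.comp_def, neg_mul, neg_neg] using this
    have h4 := h3.const_mul ‖c⁻¹‖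
    simpa [Complex.norm_exp, Complex.mul_re, norm_mul] using h4
  have := integral_Ioi_of_hasDerivAt_of_tendsto' hderiv (aux_integrableOn_cexp_Ioi hc) htend
  simpa using this

lemma aux_integral_cexp_Iic {c : ℂ} (hc : 0 < c.re) :
    ∫ x in Set.Iic (0:ℝ), Complex.exp (c * x) = c⁻¹ := by
  have h := integral_comp_neg_Ioi (0:ℝ) (fun x : ℝ => Complex.exp (c * x))
  rw [neg_zero] at h
  rw [← h, show (fun x : ℝ => Complex.exp (c * ↑(-x))) = fun x : ℝ => Complex.exp ((-c) * x) from
    funext fun x => by rw [Complex.ofReal_neg, mul_neg, ← neg_mul],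
    aux_integral_cexp_Ioi (by simpa using hc)]
  rw [inv_neg, neg_neg]

lemma aux_fourier {z : ℝ} (hz : 0 < z) (ξ : ℝ) :
    𝓕 (fun x : ℝ => ((Real.exp (-z * |x|) : ℝ) : ℂ)) ξ
      = ((2 * z / (z ^ 2 + (2 * π * ξ) ^ 2) : ℝ) : ℂ) := by
  set a : ℝ := 2 * π * ξ with ha
  have hcm : (0:ℝ) < ((z:ℂ) - a * Complex.I).re := by simpa using hz
  have hcp : ((-(z:ℂ)) - a * Complex.I).re < 0 := by simpa using hz
  rw [Real.fourier_real_eq_integral_exp_smul]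
  have eIic : Set.EqOn
      (fun v : ℝ => Complex.exp (↑(-2 * π * v * ξ) * Complex.I) • ((Real.exp (-z * |v|) : ℝ) : ℂ))
      (fun v : ℝ => Complex.exp (((z:ℂ) - a * Complex.I) * v)) (Set.Iic 0) := by
    intro v hv
    simp only [smul_eq_mul]
    rw [abs_of_nonpos hv, Complex.ofReal_exp, ← Complex.exp_add]
    congr 1
    simp only [ha]
    push_cast
    ring
  have eIoi : Set.EqOn
      (fun v : ℝ => Complex.exp (↑(-2 * π * v * ξ) * Complex.I) • ((Real.exp (-z * |v|) : ℝ) : ℂ))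
      (fun v : ℝ => Complex.exp (((-(z:ℂ)) - a * Complex.I) * v)) (Set.Ioi 0) := by
    intro v hv
    simp only [smul_eq_mul]
    rw [abs_of_pos hv, Complex.ofReal_exp, ← Complex.exp_add]
    congr 1
    simp only [ha]
    push_cast
    ring
  have hIic := (aux_integrableOn_cexp_Iic hcm).congr_fun eIic.symm measurableSet_Iic
  have hIoi := (aux_integrableOn_cexp_Ioi hcp).congr_fun eIoi.symm measurableSet_Ioi
  rw [← intervalIntegral.integral_Iic_add_Ioi hIic hIoi,
      setIntegral_congr_fun measurableSet_Iic eIic,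
      setIntegral_congr_fun measurableSet_Ioi eIoi,
      aux_integral_cexp_Iic hcm, aux_integral_cexp_Ioi hcp]
  have hne1 : (z:ℂ) - a * Complex.I ≠ 0 := fun h => by simpa [hz.ne'] using congrArg Complex.re h
  have hne2 : (z:ℂ) + a * Complex.I ≠ 0 := fun h => by simpa [hz.ne'] using congrArg Complex.re h
  have hden : (z:ℂ)^2 + (a:ℂ)^2 ≠ 0 := by
    rw [show (z:ℂ)^2 + (a:ℂ)^2 = ((z:ℂ) - a*Complex.I) * ((z:ℂ) + a*Complex.I) by
      rw [show ((z:ℂ) - a*Complex.I) * ((z:ℂ) + a*Complex.I)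
          = (z:ℂ)^2 - (a:ℂ)^2 * Complex.I^2 by ring, Complex.I_sq]; ring]
    exact mul_ne_zero hne1 hne2
  push_cast
  rw [show (-(z:ℂ) - ↑a*Complex.I) = -((z:ℂ) + ↑a*Complex.I) by ring, inv_neg, neg_neg,
    inv_add_inv hne1 hne2,
    show ((z:ℂ) - ↑a*Complex.I) + ((z:ℂ) + ↑a*Complex.I) = 2*(z:ℂ) by ring,
    show ((z:ℂ) - ↑a*Complex.I) * ((z:ℂ) + ↑a*Complex.I) = (z:ℂ)^2 + (a:ℂ)^2 by
      rw [show ((z:ℂ) - ↑a*Complex.I) * ((z:ℂ) + ↑a*Complex.I)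
          = (z:ℂ)^2 - (a:ℂ)^2 * Complex.I^2 by ring, Complex.I_sq]; ring]

lemma aux_integrable_f {z : ℝ} (hz : 0 < z) :
    Integrable (fun x : ℝ => ((Real.exp (-z * |x|) : ℝ) : ℂ)) := by
  rw [← integrableOn_univ, ← Set.Iic_union_Ioi (a := (0:ℝ))]
  refine IntegrableOn.union ?_ ?_
  · refine (aux_integrableOn_cexp_Iic (c := (z:ℂ)) (by simpa using hz)).congr_fun
      (fun x hx => ?_) measurableSet_Iic
    rw [abs_of_nonpos hx, Complex.ofReal_exp]
    congr 1
    push_cast; ring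
  · refine (aux_integrableOn_cexp_Ioi (c := (-z:ℝ)) (by simpa using hz)).congr_fun
      (fun x hx => ?_) measurableSet_Ioi
    rw [abs_of_pos hx, Complex.ofReal_exp]
    congr 1
    push_cast; ring

lemma aux_integrable_F {z : ℝ} (hz : 0 < z) :
    Integrable (fun ξ : ℝ => ((2 * z / (z ^ 2 + (2 * π * ξ) ^ 2) : ℝ) : ℂ)) := by
  refine Integrable.ofReal ?_
  have h0 : Integrable (fun ξ : ℝ => (1 + ((2 * π / z) * ξ) ^ 2)⁻¹) :=
    integrable_inv_one_add_sq.comp_mul_left' (by positivity)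
  refine (h0.const_mul (2 * z / z ^ 2)).congr ?_
  filter_upwards with ξ
  have h1 : (0:ℝ) < z ^ 2 + (2 * π * ξ) ^ 2 := by positivity
  show 2 * z / z ^ 2 * (1 + (2 * π / z * ξ) ^ 2)⁻¹ = 2 * z / (z ^ 2 + (2 * π * ξ) ^ 2)
  rw [show (1 + (2 * π / z * ξ) ^ 2) = (z ^ 2 + (2 * π * ξ) ^ 2) / z ^ 2 by
      field_simp,
    inv_div, div_mul_div_comm, mul_comm (z ^ 2) (z ^ 2 + (2 * π * ξ) ^ 2),
    mul_div_mul_right _ _ (pow_ne_zero 2 hz.ne')]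

lemma aux_inversion {z : ℝ} (hz : 0 < z) (r : ℝ) :
    ∫ ξ : ℝ, Complex.exp (↑(2 * π * ξ * r) * Complex.I)
        * ((2 * z / (z ^ 2 + (2 * π * ξ) ^ 2) : ℝ) : ℂ)
      = ((Real.exp (-z * |r|) : ℝ) : ℂ) := by
  have hcont : Continuous (fun x : ℝ => ((Real.exp (-z * |x|) : ℝ) : ℂ)) := by
    exact Complex.continuous_ofReal.comp (Real.continuous_exp.comp
      (continuous_const.mul continuous_abs))
  have hF : Integrable (𝓕 fun x : ℝ => ((Real.exp (-z * |x|) : ℝ) : ℂ)) := by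
    refine (aux_integrable_F hz).congr ?_
    filter_upwards with ξ
    exact (aux_fourier hz ξ).symm
  have hinv := (aux_integrable_f hz).fourierInv_fourier_eq hF (hcont.continuousAt (x := r))
  rw [Real.fourierInv_eq'] at hinv
  simp only [RCLike.inner_apply, starRingEnd_apply, star_trivial, smul_eq_mul] at hinv
  rw [← hinv]
  refine integral_congr_ae (Filter.Eventually.of_forall fun ξ => ?_)
  simp only
  rw [aux_fourier hz ξ, mul_assoc (2 * π) ξ r, mul_comm ξ r]


/-- For z > 0 and r > 0, ∫_ℝ e^{iλr}/(λ²+z²) dλ = (π/z)·e^{-zr}. -/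
theorem stmt3 (z r : ℝ) (hz : 0 < z) (hr : 0 < r) :
    ∫ lam : ℝ, Complex.exp (Complex.I * lam * r) / ((lam : ℂ) ^ 2 + (z : ℂ) ^ 2)
      = ((π / z) * Real.exp (-z * r) : ℝ) := by
  have key := aux_inversion hz r
  rw [abs_of_pos hr] at key
  have hco := MeasureTheory.Measure.integral_comp_mul_left
    (fun lam : ℝ => Complex.exp (Complex.I * lam * r) / ((lam : ℂ) ^ 2 + (z : ℂ) ^ 2)) (2 * π)
  rw [abs_of_pos (by positivity : (0:ℝ) < (2 * π)⁻¹)] at hco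
  have lhs_eq : ∀ ξ : ℝ, Complex.exp (Complex.I * ↑(2 * π * ξ) * r)
        / ((↑(2 * π * ξ) : ℂ) ^ 2 + (z : ℂ) ^ 2)
      = (2 * (z:ℂ))⁻¹ * (Complex.exp (↑(2 * π * ξ * r) * Complex.I)
        * ((2 * z / (z ^ 2 + (2 * π * ξ) ^ 2) : ℝ) : ℂ)) := by
    intro ξ
    have hden : ((z:ℂ) ^ 2 + ((2 * π * ξ : ℝ) : ℂ) ^ 2) ≠ 0 := by
      rw [← Complex.ofReal_pow, ← Complex.ofReal_pow, ← Complex.ofReal_add]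
      exact_mod_cast (by positivity : (z ^ 2 + (2 * π * ξ) ^ 2 : ℝ) ≠ 0)
    have harg : Complex.I * ↑(2 * π * ξ) * (r:ℂ) = ↑(2 * π * ξ * r) * Complex.I := by
      push_cast; ring
    have hDne : ((z ^ 2 + (2 * π * ξ) ^ 2 : ℝ) : ℂ) ≠ 0 :=
      Complex.ofReal_ne_zero.mpr (by positivity)
    have hzc : (z:ℂ) ≠ 0 := Complex.ofReal_ne_zero.mpr hz.ne'
    rw [harg, Complex.ofReal_div,
      show (((2 * π * ξ : ℝ) : ℂ) ^ 2 + (z:ℂ) ^ 2) = ((z ^ 2 + (2 * π * ξ) ^ 2 : ℝ) : ℂ) by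
        push_cast; ring,
      show ((2 * z : ℝ) : ℂ) = 2 * (z:ℂ) by push_cast; ring]
    field_simp
  simp_rw [lhs_eq] at hco
  rw [MeasureTheory.integral_const_mul, key] at hco
  have h2π : (2 * π : ℝ) ≠ 0 := by positivity
  have : ∫ lam : ℝ, Complex.exp (Complex.I * lam * r) / ((lam : ℂ) ^ 2 + (z : ℂ) ^ 2)
      = (2 * π : ℝ) • ((2 * (z:ℂ))⁻¹ * ((Real.exp (-z * r) : ℝ) : ℂ)) := by
    rw [hco, smul_smul, mul_inv_cancel₀ h2π, one_smul]
  rw [this, Complex.real_smul]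
  have hzc : (z:ℂ) ≠ 0 := Complex.ofReal_ne_zero.mpr hz.ne'
  push_cast
  field_simp
end

section
/- Let V = ℝⁿ with its standard inner product, let α₁,…,α_d ∈ V be nonzero vectors such that Σ_{j≠k} ⟨α_j, α_k⟩ / (α_j α_k) = 0 as a rational function (equivalently, Σ_{j≠k} ⟨α_j,α_k⟩ · Π_{i≠j,k} ℓ_{α_i} = 0 in the polynomial ring, where ℓ_α(x) = ⟨α,x⟩). Then the polynomial π(x) = Π_{j=1}^d ⟨α_j, x⟩ is harmonic: Δπ = 0. -/
open MvPolynomial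
open scoped RealInnerProductSpace

theorem pderiv_finset_prod' {n : ℕ} {σ : Type*} [DecidableEq σ] (s : Finset σ)
    (f : σ → MvPolynomial (Fin n) ℝ) (k : Fin n) :
    pderiv k (∏ j ∈ s, f j) = ∑ j ∈ s, pderiv k (f j) * ∏ i ∈ s.erase j, f i := by
  induction s using Finset.induction_on with
  | empty => simp
  | insert a s hx ih =>
    rw [Finset.prod_insert hx, pderiv_mul, ih, Finset.sum_insert hx, Finset.erase_insert hx,
      Finset.mul_sum]
    congr 1
    refine Finset.sum_congr rfl fun b hb => ?_
    rw [Finset.erase_insert_of_ne, Finset.prod_insert]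
    · ring
    · simp only [Finset.mem_erase]; rintro ⟨-, hbs⟩; exact hx hbs
    · rintro rfl; exact hx hb

/-- If α₁,…,α_d ∈ ℝⁿ are nonzero and Σ_{j≠k} ⟨α_j,α_k⟩ Π_{i≠j,k} ℓ_{α_i} = 0 in the
polynomial ring (with ℓ_α(x) = ⟨α,x⟩), then π(x) = Π_j ⟨α_j,x⟩ is harmonic. -/
theorem stmt8 {n d : ℕ} (α : Fin d → EuclideanSpace ℝ (Fin n))
    (hα : ∀ j, α j ≠ 0)
    (h : ∑ p ∈ Finset.univ.filter (fun p : Fin d × Fin d => p.1 ≠ p.2),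
          C (⟪α p.1, α p.2⟫ : ℝ) *
            ∏ i ∈ Finset.univ.filter (fun i : Fin d => i ≠ p.1 ∧ i ≠ p.2),
              (∑ k : Fin n, C (α i k) * X k) = (0 : MvPolynomial (Fin n) ℝ)) :
    ∑ k : Fin n, pderiv k (pderiv k (∏ j : Fin d, ∑ k : Fin n, C (α j k) * X k))
      = (0 : MvPolynomial (Fin n) ℝ) := by
  classical
  set L : Fin d → MvPolynomial (Fin n) ℝ := fun j => ∑ k : Fin n, C (α j k) * X k with hL
  have hderiv : ∀ (j : Fin d) (k : Fin n), pderiv k (L j) = C (α j k) := by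
    intro j k
    simp [hL, pderiv_X, Pi.single_apply, Finset.sum_ite_eq, eq_comm]
  have h1 : ∀ k : Fin n, pderiv k (∏ j : Fin d, L j)
      = ∑ j : Fin d, C (α j k) * ∏ i ∈ Finset.univ.erase j, L i := by
    intro k
    rw [pderiv_finset_prod']
    exact Finset.sum_congr rfl fun j _ => by rw [hderiv]
  have h2 : ∀ k : Fin n, pderiv k (pderiv k (∏ j : Fin d, L j))
      = ∑ j : Fin d, ∑ m ∈ Finset.univ.erase j,
          C (α j k) * C (α m k) * ∏ i ∈ (Finset.univ.erase j).erase m, L i := by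
    intro k
    rw [h1, map_sum]
    refine Finset.sum_congr rfl fun j _ => ?_
    rw [pderiv_C_mul, pderiv_finset_prod', Finset.mul_sum]
    exact Finset.sum_congr rfl fun m _ => by rw [hderiv]; ring
  have hinner : ∀ j m : Fin d, (C (⟪α j, α m⟫ : ℝ) : MvPolynomial (Fin n) ℝ)
      = ∑ k : Fin n, C (α j k) * C (α m k) := by
    intro j m
    rw [PiLp.inner_apply]
    simp [map_sum]
    exact Finset.sum_congr rfl fun _ _ => mul_comm _ _
  have hset : ∀ j m : Fin d, (Finset.univ.erase j).erase m
      = Finset.univ.filter (fun i : Fin d => i ≠ j ∧ i ≠ m) := by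
    intro j m; ext i; simp [Finset.mem_erase, and_comm]
  calc ∑ k : Fin n, pderiv k (pderiv k (∏ j : Fin d, L j))
      = ∑ j : Fin d, ∑ m ∈ Finset.univ.erase j,
          C (⟪α j, α m⟫ : ℝ) * ∏ i ∈ Finset.univ.filter (fun i : Fin d => i ≠ j ∧ i ≠ m), L i := by
        rw [Finset.sum_congr rfl fun k _ => h2 k, Finset.sum_comm]
        refine Finset.sum_congr rfl fun j _ => ?_
        rw [Finset.sum_comm]
        refine Finset.sum_congr rfl fun m _ => ?_
        rw [hinner, Finset.sum_mul, hset]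
    _ = ∑ p ∈ Finset.univ.filter (fun p : Fin d × Fin d => p.1 ≠ p.2),
          C (⟪α p.1, α p.2⟫ : ℝ) *
            ∏ i ∈ Finset.univ.filter (fun i : Fin d => i ≠ p.1 ∧ i ≠ p.2), L i := by
        rw [Finset.sum_filter, Fintype.sum_prod_type]
        refine Finset.sum_congr rfl fun j _ => ?_
        rw [← Finset.sum_filter]
        refine Finset.sum_congr ?_ fun m _ => rfl
        ext m; simp [Finset.mem_erase, ne_comm]
    _ = 0 := h
end

section
/- For integers ν, d, n with 2(ν-d) > n and real z > 0, y ∈ ℝⁿ: ∫_{ℝⁿ} e^{i⟨λ,y⟩}/(|λ|²+z²)^{ν-d} dλ = (π^{(n-1)/2} Γ(ν-d-(n-1)/2)/Γ(ν-d)) · ∫_ℝ e^{i λ₁ |y|}/(λ₁²+z²)^{ν-d-(n-1)/2} dλ₁. -/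
open MeasureTheory
open scoped RealInnerProductSpace

open Real Set

lemma gk_integrable {p r : ℝ} (hp : 0 < p) (hr : 0 < r) :
    IntegrableOn (fun t : ℝ => t ^ (p - 1) * Real.exp (-(r * t))) (Set.Ioi 0) := by
  have := integrableOn_rpow_mul_exp_neg_mul_rpow (s := p - 1) (p := 1) (by linarith) one_pos hr
  simpa [Real.rpow_one, neg_mul] using this

lemma gk_value {p r : ℝ} (hp : 0 < p) (hr : 0 < r) :
    ∫ t in Ioi (0:ℝ), t ^ (p - 1) * Real.exp (-(r * t)) = (1 / r) ^ p * Real.Gamma p :=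
  Real.integral_rpow_mul_exp_neg_mul_Ioi hp hr

lemma gauss_pi_eq (k : ℕ) (t : ℝ) :
    (fun w : Fin k → ℝ => Real.exp (-(t * ∑ i, w i ^ 2)))
      = fun w => ∏ i, Real.exp (-t * (w i) ^ 2) := by
  funext w
  rw [← Real.exp_sum]
  congr 1
  rw [Finset.mul_sum, ← Finset.sum_neg_distrib]
  simp [neg_mul]

lemma gauss_pi_int (k : ℕ) {t : ℝ} (ht : 0 < t) :
    Integrable (fun w : Fin k → ℝ => Real.exp (-(t * ∑ i, w i ^ 2))) := by
  rw [gauss_pi_eq]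
  exact Integrable.fintype_prod (fun _ => integrable_exp_neg_mul_sq ht)

lemma gauss_pi_val (k : ℕ) {t : ℝ} (ht : 0 < t) :
    ∫ w : Fin k → ℝ, Real.exp (-(t * ∑ i, w i ^ 2)) = (π / t) ^ ((k : ℝ) / 2) := by
  rw [gauss_pi_eq, volume_pi, integral_fintype_prod_eq_pow (ι := Fin k) (fun x : ℝ => Real.exp (-t * x ^ 2)),
    integral_gaussian, Fintype.card_fin, Real.sqrt_eq_rpow,
    ← Real.rpow_natCast (((π / t) ^ ((1:ℝ)/2))) k, ← Real.rpow_mul (by positivity)]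
  congr 1
  ring

lemma key (k : ℕ) {s a : ℝ} (hs : (k : ℝ) / 2 < s) (ha : 0 < a) :
    Integrable (fun w : Fin k → ℝ => (a + ∑ i, w i ^ 2) ^ (-s)) ∧
    ∫ w : Fin k → ℝ, (a + ∑ i, w i ^ 2) ^ (-s)
      = π ^ ((k : ℝ) / 2) * Real.Gamma (s - k / 2) / Real.Gamma s
          * a ^ (-(s - (k : ℝ) / 2)) := by
  have hs0 : 0 < s := lt_of_le_of_lt (by positivity) hs
  have hQ : ∀ w : Fin k → ℝ, 0 < a + ∑ i, w i ^ 2 := by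
    intro w
    have : (0:ℝ) ≤ ∑ i, w i ^ 2 := Finset.sum_nonneg fun i _ => sq_nonneg _
    linarith
  set μ := (volume.restrict (Ioi (0:ℝ))).prod (volume : Measure (Fin k → ℝ)) with hμ
  set f : ℝ × (Fin k → ℝ) → ℝ :=
    fun p => p.1 ^ (s - 1) * Real.exp (-(p.1 * (a + ∑ i, p.2 i ^ 2))) with hf
  have hfm : AEStronglyMeasurable f μ := by
    apply Measurable.aestronglyMeasurable
    fun_prop
  -- sections in w for fixed t > 0
  have hsec : ∀ t : ℝ, 0 < t → Integrable (fun w : Fin k → ℝ => f (t, w)) := by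
    intro t ht
    have : (fun w : Fin k → ℝ => f (t, w))
        = fun w => (t ^ (s - 1) * Real.exp (-(t * a))) * Real.exp (-(t * ∑ i, w i ^ 2)) := by
      funext w
      simp only [hf]
      rw [mul_assoc, ← Real.exp_add]
      congr 2
      ring
    rw [this]
    exact (gauss_pi_int k ht).const_mul _
  have hsecval : ∀ t : ℝ, 0 < t → (∫ w : Fin k → ℝ, f (t, w))
      = π ^ ((k : ℝ) / 2) * (t ^ ((s - k / 2) - 1) * Real.exp (-(a * t))) := by
    intro t ht
    have h1 : (fun w : Fin k → ℝ => f (t, w))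
        = fun w => (t ^ (s - 1) * Real.exp (-(t * a))) * Real.exp (-(t * ∑ i, w i ^ 2)) := by
      funext w
      simp only [hf]
      rw [mul_assoc, ← Real.exp_add]
      congr 2
      ring
    rw [h1, integral_const_mul, gauss_pi_val k ht]
    rw [Real.div_rpow pi_nonneg ht.le]
    have h2 : t ^ ((s - k / 2) - 1) = t ^ (s - 1) / t ^ ((k:ℝ)/2) := by
      rw [← Real.rpow_sub ht]
      congr 1
      ring
    rw [h2]
    ring
  have h1 : Integrable f μ := by
    rw [hμ, integrable_prod_iff hfm]
    constructor
    · filter_upwards [ae_restrict_mem measurableSet_Ioi] with t ht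
      exact hsec t ht
    · have hint : IntegrableOn
          (fun t : ℝ => π ^ ((k : ℝ) / 2) * (t ^ ((s - k / 2) - 1) * Real.exp (-(a * t))))
          (Ioi 0) :=
        (gk_integrable (by linarith) ha).const_mul _
      refine hint.congr ?_
      filter_upwards [ae_restrict_mem measurableSet_Ioi] with t ht
      rw [← hsecval t ht]
      refine integral_congr_ae (Filter.Eventually.of_forall fun w => ?_)
      refine (Real.norm_of_nonneg ?_).symm
      exact mul_nonneg (Real.rpow_nonneg ht.le _) (Real.exp_pos _).le
  have hGs : Real.Gamma s ≠ 0 := (Real.Gamma_pos_of_pos hs0).ne'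
  have swap : (∫ t in Ioi (0:ℝ), ∫ w : Fin k → ℝ, f (t, w))
      = ∫ w : Fin k → ℝ, ∫ t in Ioi (0:ℝ), f (t, w) :=
    integral_integral_swap h1
  have hL : (∫ t in Ioi (0:ℝ), ∫ w : Fin k → ℝ, f (t, w))
      = π ^ ((k:ℝ)/2) * ((1/a) ^ (s - (k:ℝ)/2) * Real.Gamma (s - (k:ℝ)/2)) := by
    rw [setIntegral_congr_fun measurableSet_Ioi (fun t ht => hsecval t ht),
      integral_const_mul, gk_value (by linarith) ha]
  have hR : ∀ w : Fin k → ℝ, (∫ t in Ioi (0:ℝ), f (t, w))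
      = Real.Gamma s * (a + ∑ i, w i ^ 2) ^ (-s) := by
    intro w
    have e1 : (∫ t in Ioi (0:ℝ), f (t, w))
        = ∫ t in Ioi (0:ℝ), t ^ (s - 1) * Real.exp (-((a + ∑ i, w i ^ 2) * t)) := by
      refine setIntegral_congr_fun measurableSet_Ioi fun t _ => ?_
      simp only [hf]
      rw [mul_comm t]
    rw [e1, gk_value hs0 (hQ w), one_div, Real.inv_rpow (hQ w).le, ← Real.rpow_neg (hQ w).le,
      mul_comm]
  constructor
  · have h2 := h1.integral_prod_right
    have h3 : (fun w : Fin k → ℝ => ∫ t in Ioi (0:ℝ), f (t, w))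
        = fun w => Real.Gamma s * (a + ∑ i, w i ^ 2) ^ (-s) := funext hR
    rw [h3] at h2
    refine (h2.const_mul (Real.Gamma s)⁻¹).congr (Filter.Eventually.of_forall fun w => ?_)
    field_simp
  · have e2 : (∫ w : Fin k → ℝ, ∫ t in Ioi (0:ℝ), f (t, w))
        = Real.Gamma s * ∫ w : Fin k → ℝ, (a + ∑ i, w i ^ 2) ^ (-s) := by
      rw [integral_congr_ae (Filter.Eventually.of_forall hR), integral_const_mul]
    have := swap
    rw [hL, e2] at this
    have ha2 : (1/a) ^ (s - (k:ℝ)/2) = a ^ (-(s - (k:ℝ)/2)) := by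
      rw [one_div, Real.inv_rpow ha.le, ← Real.rpow_neg ha.le]
    rw [ha2] at this
    rw [div_mul_eq_mul_div, eq_div_iff hGs]
    linear_combination -this


lemma key1 {s a : ℝ} (hs : 1 / 2 < s) (ha : 0 < a) :
    Integrable (fun x : ℝ => (a + x ^ 2) ^ (-s)) ∧
    ∫ x : ℝ, (a + x ^ 2) ^ (-s)
      = π ^ ((1:ℝ) / 2) * Real.Gamma (s - 1 / 2) / Real.Gamma s * a ^ (-(s - 1 / 2)) := by
  have h := key 1 (s := s) (a := a) (by norm_num [hs]) ha
  have hmp := volume_preserving_funUnique (Fin 1) ℝ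
  set e := MeasurableEquiv.funUnique (Fin 1) ℝ with he
  have hco : ∀ v : Fin 1 → ℝ, (a + (e v) ^ 2) ^ (-s) = (a + ∑ i, v i ^ 2) ^ (-s) := by
    intro v
    simp [he, MeasurableEquiv.funUnique, Equiv.funUnique, Fin.sum_univ_one]
  have hint : Integrable (fun x : ℝ => (a + x ^ 2) ^ (-s)) := by
    rw [← (hmp.integrable_comp_emb e.measurableEmbedding)]
    refine h.1.congr (Filter.Eventually.of_forall fun v => ?_)
    exact (hco v).symm
  have hval : (∫ x : ℝ, (a + x ^ 2) ^ (-s)) = ∫ v : Fin 1 → ℝ, (a + ∑ i, v i ^ 2) ^ (-s) := by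
    rw [← hmp.integral_comp e.measurableEmbedding]
    exact integral_congr_ae (Filter.Eventually.of_forall hco)
  refine ⟨hint, ?_⟩
  rw [hval, h.2]
  norm_num

/-- Reduction to one dimension: for integers ν, d with 2(ν-d) > n and z > 0,
∫_{ℝⁿ} e^{i⟨λ,y⟩}/(|λ|²+z²)^{ν-d} dλ
  = π^{(n-1)/2} (Γ(ν-d-(n-1)/2)/Γ(ν-d)) ∫_ℝ e^{iλ₁|y|}/(λ₁²+z²)^{ν-d-(n-1)/2} dλ₁. -/
theorem stmt11 {n : ℕ} (ν d : ℤ) (hn : (n : ℤ) < 2 * (ν - d)) (z : ℝ) (hz : 0 < z)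
    (y : EuclideanSpace ℝ (Fin n)) :
    ∫ lam : EuclideanSpace ℝ (Fin n),
        Complex.exp (Complex.I * (⟪lam, y⟫ : ℝ))
          / (((‖lam‖ ^ 2 + z ^ 2) ^ (((ν - d : ℤ) : ℝ)) : ℝ) : ℂ)
      = ((Real.pi ^ (((n : ℝ) - 1) / 2) *
            Real.Gamma (((ν - d : ℤ) : ℝ) - ((n : ℝ) - 1) / 2)
            / Real.Gamma (((ν - d : ℤ) : ℝ)) : ℝ) : ℂ) *
          ∫ l : ℝ, Complex.exp (Complex.I * l * ‖y‖)
            / (((l ^ 2 + z ^ 2) ^ ((((ν - d : ℤ) : ℝ)) - ((n : ℝ) - 1) / 2) : ℝ) : ℂ) := by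
  cases n with
  | zero =>
    set s : ℝ := ((ν - d : ℤ) : ℝ) with hsdef
    have hs0 : 0 < s := by
      have : (0:ℤ) < ν - d := by omega
      simp only [hsdef]
      exact_mod_cast this
    have hz2 : 0 < z ^ 2 := by positivity
    have hGs : Real.Gamma s ≠ 0 := (Real.Gamma_pos_of_pos hs0).ne'
    have hGs2 : Real.Gamma (s + 1/2) ≠ 0 := (Real.Gamma_pos_of_pos (by linarith)).ne'
    haveI : Unique (EuclideanSpace ℝ (Fin 0)) :=
      ⟨⟨0⟩, fun a => by ext i; exact Fin.elim0 i⟩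
    have hy : y = 0 := Subsingleton.elim y 0
    have hE : s - (((0:ℕ) : ℝ) - 1) / 2 = s + 1/2 := by push_cast; ring
    -- LHS
    have hLHS : (∫ lam : EuclideanSpace ℝ (Fin 0),
          Complex.exp (Complex.I * (⟪lam, y⟫ : ℝ))
            / (((‖lam‖ ^ 2 + z ^ 2) ^ s : ℝ) : ℂ))
        = (((z ^ 2) ^ (-s) : ℝ) : ℂ) := by
      have hcst : ∀ lam : EuclideanSpace ℝ (Fin 0),
          Complex.exp (Complex.I * (⟪lam, y⟫ : ℝ)) / (((‖lam‖ ^ 2 + z ^ 2) ^ s : ℝ) : ℂ)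
            = (((z ^ 2) ^ (-s) : ℝ) : ℂ) := by
        intro lam
        rw [Subsingleton.elim lam 0, hy]
        simp [Real.rpow_neg hz2.le, Complex.ofReal_inv, one_div]
      rw [integral_congr_ae (Filter.Eventually.of_forall hcst), integral_const,
        volume_euclideanSpace_eq_dirac]
      simp
    rw [hE, hLHS]
    -- RHS integral
    have hRptwise : ∀ l : ℝ, Complex.exp (Complex.I * l * ‖y‖)
        / (((l ^ 2 + z ^ 2) ^ (s + 1/2) : ℝ) : ℂ)
        = (((z ^ 2 + l ^ 2) ^ (-(s + 1/2)) : ℝ) : ℂ) := by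
      intro l
      rw [hy]
      have hpos : (0:ℝ) < l ^ 2 + z ^ 2 := by positivity
      rw [add_comm (z^2), Real.rpow_neg hpos.le]
      simp [Complex.ofReal_inv, one_div]
    have hco : ∫ a : ℝ, (((z^2+a^2)^(-(s+1/2)) : ℝ) : ℂ)
        = ((∫ a : ℝ, (z^2+a^2)^(-(s+1/2)) : ℝ) : ℂ) := integral_ofReal
    rw [integral_congr_ae (Filter.Eventually.of_forall hRptwise), hco]
    have hk := (key1 (s := s + 1/2) (a := z^2) (by linarith) hz2).2
    rw [hk, ← Complex.ofReal_mul]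
    congr 1
    have h1 : s + 1/2 - 1/2 = s := by ring
    rw [h1]
    have hzero : Real.pi ^ ((((0:ℕ):ℝ) - 1) / 2) = (Real.pi ^ ((1:ℝ)/2))⁻¹ := by
      rw [← Real.rpow_neg Real.pi_pos.le]
      norm_num
    rw [hzero]
    have hph : Real.pi ^ ((1:ℝ)/2) ≠ 0 := (Real.rpow_pos_of_pos Real.pi_pos _).ne'
    field_simp
  | succ m =>
    set s : ℝ := ((ν - d : ℤ) : ℝ) with hsdef
    have hscast : ((m:ℝ) + 1) < 2 * s := by
      rw [hsdef]
      push_cast at hn ⊢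
      exact_mod_cast hn
    have hsm : (m : ℝ) / 2 < s := by linarith
    have hsm2 : 1 / 2 < s - (m:ℝ)/2 := by linarith
    have hs0 : 0 < s := lt_of_le_of_lt (by positivity) hsm
    have hGs : Real.Gamma s ≠ 0 := (Real.Gamma_pos_of_pos hs0).ne'
    have hE : ((((m+1:ℕ)) : ℝ) - 1) / 2 = (m:ℝ)/2 := by push_cast; ring
    rw [hE]
    set C : ℝ := π ^ ((m:ℝ)/2) * Real.Gamma (s - (m:ℝ)/2) / Real.Gamma s with hC
    -- Step 1: rotation
    set e₀ : EuclideanSpace ℝ (Fin (m+1)) := EuclideanSpace.single 0 1 with he₀def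
    have hy' : ‖(‖y‖ • e₀ : EuclideanSpace ℝ (Fin (m+1)))‖ = ‖y‖ := by
      rw [norm_smul]
      simp [he₀def, EuclideanSpace.norm_single]
    set T := Submodule.reflection (ℝ ∙ ((‖y‖ • e₀ : EuclideanSpace ℝ (Fin (m+1))) - y))ᗮ with hTdef
    have hT : T (‖y‖ • e₀) = y := Submodule.reflection_sub hy'
    have step1 : (∫ lam : EuclideanSpace ℝ (Fin (m+1)),
          Complex.exp (Complex.I * (⟪lam, y⟫ : ℝ)) / (((‖lam‖ ^ 2 + z ^ 2) ^ s : ℝ) : ℂ))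
        = ∫ μ : EuclideanSpace ℝ (Fin (m+1)),
          Complex.exp (Complex.I * ((‖y‖ * μ 0 : ℝ) : ℂ)) / (((‖μ‖ ^ 2 + z ^ 2) ^ s : ℝ) : ℂ) := by
      rw [← (T.measurePreserving).integral_comp T.toHomeomorph.measurableEmbedding]
      refine integral_congr_ae (Filter.Eventually.of_forall fun μ => ?_)
      have h0 : ⟪μ, e₀⟫ = μ 0 := by
        simp [he₀def, EuclideanSpace.inner_single_right]
      have h1 : ⟪T μ, y⟫ = ‖y‖ * μ 0 := by
        calc ⟪T μ, y⟫ = ⟪T μ, T (‖y‖ • e₀)⟫ := by rw [hT]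
          _ = ⟪μ, ‖y‖ • e₀⟫ := T.inner_map_map μ _
          _ = ‖y‖ * ⟪μ, e₀⟫ := real_inner_smul_right _ _ _
          _ = ‖y‖ * μ 0 := by rw [h0]
      simp only [h1, LinearIsometryEquiv.norm_map]
    rw [step1]
    -- Step 2: to pi type
    have step2 : (∫ μ : EuclideanSpace ℝ (Fin (m+1)),
          Complex.exp (Complex.I * ((‖y‖ * μ 0 : ℝ) : ℂ)) / (((‖μ‖ ^ 2 + z ^ 2) ^ s : ℝ) : ℂ))
        = ∫ v : Fin (m+1) → ℝ,
          Complex.exp (Complex.I * ((‖y‖ * v 0 : ℝ) : ℂ))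
            / ((((∑ i, v i ^ 2) + z ^ 2) ^ s : ℝ) : ℂ) := by
      rw [← ((EuclideanSpace.volume_preserving_symm_measurableEquiv_toLp (Fin (m+1))).symm _).integral_comp
        (MeasurableEquiv.measurableEmbedding _)]
      refine integral_congr_ae (Filter.Eventually.of_forall fun v => ?_)
      have hap : ∀ i, ((MeasurableEquiv.toLp 2 (Fin (m+1) → ℝ)).symm.symm v) i = v i := fun i => rfl
      have hnorm : ‖(MeasurableEquiv.toLp 2 (Fin (m+1) → ℝ)).symm.symm v‖ ^ 2 = ∑ i, v i ^ 2 := by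
        rw [EuclideanSpace.norm_eq]
        rw [Real.sq_sqrt (Finset.sum_nonneg fun i _ => sq_nonneg _)]
        simp [hap]
      beta_reduce
      rw [hnorm, hap 0]
    rw [step2]
    -- Step 3: split first coordinate
    set G : ℝ × (Fin m → ℝ) → ℂ := fun p =>
      Complex.exp (Complex.I * ((‖y‖ * p.1 : ℝ) : ℂ))
        * ((((p.1 ^ 2 + z ^ 2) + ∑ i, p.2 i ^ 2) ^ (-s) : ℝ) : ℂ) with hG
    have step3 : (∫ v : Fin (m+1) → ℝ,
          Complex.exp (Complex.I * ((‖y‖ * v 0 : ℝ) : ℂ))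
            / ((((∑ i, v i ^ 2) + z ^ 2) ^ s : ℝ) : ℂ))
        = ∫ p : ℝ × (Fin m → ℝ), G p := by
      rw [← (volume_preserving_piFinSuccAbove (fun _ : Fin (m+1) => ℝ) 0).integral_comp
        (MeasurableEquiv.measurableEmbedding _)]
      refine integral_congr_ae (Filter.Eventually.of_forall fun v => ?_)
      have he : (MeasurableEquiv.piFinSuccAbove (fun _ : Fin (m+1) => ℝ) 0) v
          = (v 0, fun j => v ((0:Fin (m+1)).succAbove j)) := rfl
      have hsum : (∑ i, v i ^ 2) = v 0 ^ 2 + ∑ j : Fin m, v ((0:Fin (m+1)).succAbove j) ^ 2 :=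
        Fin.sum_univ_succAbove (fun i => v i ^ 2) 0
      have hpos : (0:ℝ) < (v 0 ^ 2 + z ^ 2) + ∑ j : Fin m, v ((0:Fin (m+1)).succAbove j) ^ 2 := by
        have : (0:ℝ) ≤ ∑ j : Fin m, v ((0:Fin (m+1)).succAbove j) ^ 2 :=
          Finset.sum_nonneg fun i _ => sq_nonneg _
        positivity
      beta_reduce
      rw [hG, he]
      simp only
      rw [hsum, Real.rpow_neg hpos.le]
      rw [div_eq_mul_inv, ← Complex.ofReal_inv]
      ring_nf
    rw [step3]
    have hz2 : (0:ℝ) < z ^ 2 := by positivity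
    -- positivity of the base
    have hApos : ∀ p : ℝ × (Fin m → ℝ), (0:ℝ) < (p.1 ^ 2 + z ^ 2) + ∑ i, p.2 i ^ 2 := by
      intro p
      have : (0:ℝ) ≤ ∑ i, p.2 i ^ 2 := Finset.sum_nonneg fun i _ => sq_nonneg _
      positivity
    have hGm : AEStronglyMeasurable G ((volume : Measure ℝ).prod volume) := by
      have hA : Continuous (fun p : ℝ × (Fin m → ℝ) => (p.1 ^ 2 + z ^ 2) + ∑ i, p.2 i ^ 2) := by
        fun_prop
      have hc1 : Continuous fun p : ℝ × (Fin m → ℝ) =>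
          Complex.exp (Complex.I * ((‖y‖ * p.1 : ℝ) : ℂ)) := by
        apply Complex.continuous_exp.comp
        apply Continuous.mul continuous_const
        exact Complex.continuous_ofReal.comp (continuous_const.mul continuous_fst)
      have hc2 : Continuous fun p : ℝ × (Fin m → ℝ) =>
          ((((p.1 ^ 2 + z ^ 2) + ∑ i, p.2 i ^ 2) ^ (-s) : ℝ) : ℂ) :=
        Complex.continuous_ofReal.comp (hA.rpow_const fun p => Or.inl (hApos p).ne')
      exact (hc1.mul hc2).aestronglyMeasurable
    have hsec : ∀ x : ℝ, Integrable (fun w : Fin m → ℝ => G (x, w)) := by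
      intro x
      have hp : (0:ℝ) < x ^ 2 + z ^ 2 := by positivity
      have := ((key m hsm hp).1.ofReal (𝕜 := ℂ)).const_mul
        (Complex.exp (Complex.I * ((‖y‖ * x : ℝ) : ℂ)))
      exact this
    have hnormeq : ∀ x : ℝ, (fun w : Fin m → ℝ => ‖G (x, w)‖)
        = fun w : Fin m → ℝ => ((x ^ 2 + z ^ 2) + ∑ i, w i ^ 2) ^ (-s) := by
      intro x
      funext w
      rw [hG]
      beta_reduce
      rw [norm_mul]
      have h1 : ‖Complex.exp (Complex.I * ((‖y‖ * x : ℝ) : ℂ))‖ = 1 := by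
        rw [Complex.norm_exp]
        simp
      have h2 : ‖((((x ^ 2 + z ^ 2) + ∑ i, w i ^ 2) ^ (-s) : ℝ) : ℂ)‖
          = ((x ^ 2 + z ^ 2) + ∑ i, w i ^ 2) ^ (-s) := by
        rw [Complex.norm_real]
        exact abs_of_nonneg (Real.rpow_nonneg (hApos (x, w)).le _)
      rw [h1, h2, one_mul]
    have hGint : Integrable G ((volume : Measure ℝ).prod volume) := by
      rw [integrable_prod_iff hGm]
      refine ⟨Filter.Eventually.of_forall hsec, ?_⟩
      have hintx : Integrable (fun x : ℝ => C * (x ^ 2 + z ^ 2) ^ (-(s - (m:ℝ)/2))) := by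
        refine ((key1 hsm2 hz2).1.const_mul C).congr (Filter.Eventually.of_forall fun x => ?_)
        beta_reduce
        rw [add_comm (z ^ 2)]
      refine hintx.congr (Filter.Eventually.of_forall fun x => ?_)
      beta_reduce
      rw [hnormeq x]
      have hp : (0:ℝ) < x ^ 2 + z ^ 2 := by positivity
      rw [(key m hsm hp).2, hC]
    rw [Measure.volume_eq_prod, integral_prod _ hGint]
    have hinner : ∀ x : ℝ, (∫ w : Fin m → ℝ, G (x, w))
        = Complex.exp (Complex.I * ((‖y‖ * x : ℝ) : ℂ))
            * ((C * (x ^ 2 + z ^ 2) ^ (-(s - (m:ℝ)/2)) : ℝ) : ℂ) := by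
      intro x
      have hp : (0:ℝ) < x ^ 2 + z ^ 2 := by positivity
      have hco : ∫ w : Fin m → ℝ, ((((x ^ 2 + z ^ 2) + ∑ i, w i ^ 2) ^ (-s) : ℝ) : ℂ)
          = ((∫ w : Fin m → ℝ, ((x ^ 2 + z ^ 2) + ∑ i, w i ^ 2) ^ (-s) : ℝ) : ℂ) :=
        integral_ofReal
      simp only [hG]
      rw [integral_const_mul, hco, (key m hsm hp).2, ← hC]
    rw [integral_congr_ae (Filter.Eventually.of_forall hinner)]
    have hpt : ∀ x : ℝ, Complex.exp (Complex.I * ((‖y‖ * x : ℝ) : ℂ))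
          * ((C * (x ^ 2 + z ^ 2) ^ (-(s - (m:ℝ)/2)) : ℝ) : ℂ)
        = ((C : ℝ) : ℂ) * (Complex.exp (Complex.I * x * ‖y‖)
            / (((x ^ 2 + z ^ 2) ^ (s - (m:ℝ)/2) : ℝ) : ℂ)) := by
      intro x
      have hp : (0:ℝ) < x ^ 2 + z ^ 2 := by positivity
      have harg : Complex.I * ((‖y‖ * x : ℝ) : ℂ) = Complex.I * x * ‖y‖ := by
        push_cast
        ring
      rw [harg, Real.rpow_neg hp.le]
      push_cast
      ring
    rw [integral_congr_ae (Filter.Eventually.of_forall hpt), integral_const_mul]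
end
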